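/- For nonnegative integers ℓ, m with m ≤ 2ℓ, and A(z) := z^ℓ, the iterated Dunkl derivative satisfies D^m x^{2ℓ} = Σ_{j=0}^{m} 2^{m-2j} A^{(m-j)}(x²) · (1/j!) · D^{2j} x^m, where A^{(m-j)} denotes the (m-j)-th ordinary derivative of A and D is the one-dimensional Dunkl operator with parameter α. -/
import Mathlib
open Polynomial

noncomputable def dunkl1 (α : ℝ) (p : Polynomial ℝ) : Polynomial ℝ :=
  derivative p + C α * (p - p.comp (-X)).divX

noncomputable def lam (α : ℝ) (k : ℕ) : ℝ := k + α * (1 - (-1)^k)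

noncomputable def dprod (α : ℝ) (n m : ℕ) : ℝ := ∏ i ∈ Finset.range m, lam α (n - i)

lemma lam_zero (α : ℝ) : lam α 0 = 0 := by simp [lam]

lemma dprod_succ (α : ℝ) (n m : ℕ) :
    dprod α n (m+1) = dprod α n m * lam α (n - m) := Finset.prod_range_succ _ _

lemma dprod_succ_left (α : ℝ) (m k : ℕ) :
    dprod α (m+1) (k+1) = dprod α m k * lam α (m+1) := by
  unfold dprod
  rw [Finset.prod_range_succ']
  simp [Nat.succ_sub_succ]

lemma dprod_eq_zero (α : ℝ) (n m : ℕ) (h : n < m) : dprod α n m = 0 := by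
  apply Finset.prod_eq_zero (Finset.mem_range.mpr h)
  simp [Nat.sub_self, lam_zero]

lemma npow_neg_one_sub (a b : ℕ) (h : b ≤ a) :
    (-1:ℝ)^(a-b) = (-1:ℝ)^a * (-1:ℝ)^b := by
  obtain ⟨c, rfl⟩ := Nat.exists_eq_add_of_le h
  rw [Nat.add_sub_cancel_left, pow_add]
  have hb2 : (-1:ℝ)^(b*2) = 1 := by rw [pow_mul', neg_one_sq, one_pow]
  linear_combination (-(-1:ℝ)^c) * hb2

noncomputable def Ffun (α : ℝ) (ℓ m j : ℕ) : ℝ :=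
  (2:ℝ)^((m:ℤ) - 2*(j:ℤ)) * (ℓ.descFactorial (m-j) : ℝ) * (1/(j.factorial:ℝ)) * dprod α m (2*j)

noncomputable def Ufun (α : ℝ) (ℓ m j : ℕ) : ℝ :=
  (2:ℝ)^((m:ℤ) + 1 - 2*(j:ℤ)) * (ℓ.descFactorial (m+1-j) : ℝ) * (1/(j.factorial:ℝ)) * dprod α m (2*j)

lemma star (α : ℝ) (ℓ m j : ℕ) (hj : j ≤ m) (h : m ≤ 2*ℓ) :
    Ffun α ℓ m j * lam α (2*ℓ - m) + Ufun α ℓ m (j+1)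
      = Ufun α ℓ m j + Ffun α ℓ (m+1) (j+1) := by
  have e2j2 : dprod α m (2*(j+1)) = dprod α m (2*j) * lam α (m - 2*j) * lam α (m - (2*j+1)) := by
    rw [show 2*(j+1) = (2*j+1)+1 by ring, dprod_succ, dprod_succ]
  have e2j2' : dprod α (m+1) (2*(j+1)) = dprod α m (2*j) * lam α (m - 2*j) * lam α (m+1) := by
    rw [show 2*(j+1) = (2*j+1)+1 by ring, dprod_succ_left, dprod_succ]
  rcases lt_or_ge m (2*j) with hlt | hge
  · have z1 : dprod α m (2*j) = 0 := dprod_eq_zero α m _ hlt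
    simp [Ffun, Ufun, e2j2, e2j2', z1]
  rcases eq_or_lt_of_le hge with heq | hlt2
  · -- 2*j = m
    have hz : lam α (m - 2*j) = 0 := by rw [← heq, Nat.sub_self, lam_zero]
    have hjl : j ≤ ℓ := by omega
    have hc1 : (-1:ℝ)^(2*ℓ - m) = 1 := by
      rw [show 2*ℓ - m = 2*(ℓ - j) by omega, pow_mul, neg_one_sq, one_pow]
    have hc2 : ((2*ℓ - m : ℕ) : ℝ) = 2*(ℓ:ℝ) - 2*(j:ℝ) := by
      rw [Nat.cast_sub h]; push_cast [← heq]; ring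
    have hd : (ℓ.descFactorial (m+1-j) : ℝ) = ((ℓ:ℝ) - j) * (ℓ.descFactorial (m-j)) := by
      rw [show m+1-j = (m-j)+1 by omega, Nat.descFactorial_succ, show m - j = j by omega]
      push_cast [Nat.cast_sub hjl]; ring
    have hp : (2:ℝ)^((m:ℤ) + 1 - 2*(j:ℤ)) = 2 * (2:ℝ)^((m:ℤ) - 2*(j:ℤ)) := by
      rw [show (m:ℤ)+1-2*(j:ℤ) = ((m:ℤ)-2*(j:ℤ))+1 by ring, zpow_add_one₀ two_ne_zero]; ring
    simp only [Ffun, Ufun, e2j2, e2j2', hz, mul_zero, zero_mul, add_zero]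
    rw [lam, hc1, hc2, hd, hp]
    ring
  · -- 2*j + 1 ≤ m
    have h21 : 2*j+1 ≤ m := hlt2
    rcases le_or_gt (m-j) ℓ with hD | hD
    · -- main case
      have em : (-1:ℝ)^(2*ℓ) = 1 := by rw [pow_mul, neg_one_sq, one_pow]
      have l1 : lam α (2*ℓ - m) = 2*(ℓ:ℝ) - m + α*(1-(-1:ℝ)^m) := by
        rw [lam, npow_neg_one_sub _ _ h, em, one_mul, Nat.cast_sub h]
        push_cast; ring
      have l2 : lam α (m - 2*j) = (m:ℝ) - 2*j + α*(1-(-1:ℝ)^m) := by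
        rw [lam, npow_neg_one_sub _ _ (by omega : 2*j ≤ m), Nat.cast_sub (by omega : 2*j ≤ m)]
        rw [pow_mul, neg_one_sq, one_pow, mul_one]
        push_cast; ring
      have l3 : lam α (m - (2*j+1)) = (m:ℝ) - 2*j - 1 + α*(1+(-1:ℝ)^m) := by
        rw [lam, npow_neg_one_sub _ _ h21, Nat.cast_sub h21]
        rw [pow_succ, pow_mul, neg_one_sq, one_pow, one_mul]
        push_cast; ring
      have l4 : lam α (m+1) = (m:ℝ) + 1 + α*(1+(-1:ℝ)^m) := by
        rw [lam, pow_succ]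
        push_cast; ring
      have hd : (ℓ.descFactorial (m+1-j) : ℝ)
          = ((ℓ:ℝ) - ((m:ℝ)-(j:ℝ))) * (ℓ.descFactorial (m-j)) := by
        rw [show m+1-j = (m-j)+1 by omega, Nat.descFactorial_succ]
        push_cast [Nat.cast_sub hD, Nat.cast_sub hj]; ring
      have hdd : (m+1) - (j+1) = m - j := by omega
      have hfac : ((j+1).factorial : ℝ) = ((j:ℝ)+1) * (j.factorial : ℝ) := by
        rw [Nat.factorial_succ]; push_cast; ring
      have q1 : (2:ℝ)^((m:ℤ) + 1 - 2*(j:ℤ)) = 2 * (2:ℝ)^((m:ℤ) - 2*(j:ℤ)) := by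
        rw [show (m:ℤ)+1-2*(j:ℤ) = ((m:ℤ)-2*(j:ℤ))+1 by ring, zpow_add_one₀ two_ne_zero]; ring
      have q2 : (2:ℝ)^((m:ℤ) + 1 - 2*((j:ℤ)+1)) = (2:ℝ)^((m:ℤ) - 2*(j:ℤ)) / 2 := by
        rw [show (m:ℤ)+1-2*((j:ℤ)+1) = ((m:ℤ)-2*(j:ℤ))-1 by ring, zpow_sub_one₀ two_ne_zero]; ring
      have q3 : (2:ℝ)^(((m:ℤ)+1) - 2*((j:ℤ)+1)) = (2:ℝ)^((m:ℤ) - 2*(j:ℤ)) / 2 := by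
        rw [show (m:ℤ)+1-2*((j:ℤ)+1) = ((m:ℤ)-2*(j:ℤ))-1 by ring, zpow_sub_one₀ two_ne_zero]; ring
      have fj : (j.factorial : ℝ) ≠ 0 := Nat.cast_ne_zero.mpr (Nat.factorial_ne_zero j)
      simp only [Ffun, Ufun, e2j2, e2j2', hdd, hfac]
      push_cast
      rw [l1, l2, l3, l4, hd, q1, q2]
      field_simp
      ring
    · -- m - j > ℓ : descFactorials vanish
      have z : (ℓ.descFactorial (m-j) : ℝ) = 0 := by
        rw [Nat.descFactorial_eq_zero_iff_lt.mpr hD]; simp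
      have z2 : (ℓ.descFactorial (m+1-j) : ℝ) = 0 := by
        rw [show m+1-j = (m-j)+1 by omega, Nat.descFactorial_succ]
        push_cast
        rw [Nat.descFactorial_eq_zero_iff_lt.mpr hD]; simp
      have hdd : (m+1) - (j+1) = m - j := by omega
      have hdd2 : m+1 - (j+1) = m - j := by omega
      simp [Ffun, Ufun, hdd, hdd2, z, z2]

lemma dunkl1_C_mul (α c : ℝ) (p : Polynomial ℝ) :
    dunkl1 α (C c * p) = C c * dunkl1 α p := by
  simp only [dunkl1, derivative_C_mul, mul_comp, C_comp, ← mul_sub, divX_C_mul]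
  ring

lemma dunkl1_X_pow (α : ℝ) (k : ℕ) :
    dunkl1 α (X ^ k : Polynomial ℝ) = C (lam α k) * X ^ (k - 1) := by
  cases k with
  | zero => simp [dunkl1, lam_zero]
  | succ n =>
    have h1 : ((X : Polynomial ℝ) ^ (n+1)).comp (-X) = C ((-1:ℝ)^(n+1)) * X ^ (n+1) := by
      rw [pow_comp, X_comp, neg_pow, map_pow, map_neg, map_one]
    have h2 : (X ^ (n+1) - ((X : Polynomial ℝ) ^ (n+1)).comp (-X)) =
        C (1 - (-1:ℝ)^(n+1)) * X ^ (n+1) := by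
      rw [h1, C_sub, C_1, sub_mul, one_mul]
    rw [dunkl1, h2, divX_C_mul, divX_X_pow]
    simp only [Nat.succ_ne_zero, if_false, derivative_X_pow, lam]
    rw [Nat.add_sub_cancel]
    rw [C_add, C_mul]
    push_cast
    ring

lemma dunkl1_iter_X_pow (α : ℝ) (n m : ℕ) :
    (dunkl1 α)^[m] (X ^ n : Polynomial ℝ) = C (dprod α n m) * X ^ (n - m) := by
  induction m with
  | zero => simp [dprod]
  | succ m ih =>
    rw [Function.iterate_succ_apply', ih, dunkl1_C_mul, dunkl1_X_pow]
    simp only [dprod, Finset.prod_range_succ, C_mul, Nat.sub_sub]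
    ring


lemma scalar (α : ℝ) (ℓ m : ℕ) (h : m ≤ 2*ℓ) :
    dprod α (2*ℓ) m = ∑ j ∈ Finset.range (m+1), Ffun α ℓ m j := by
  induction m with
  | zero => simp [dprod, Ffun]
  | succ m ih =>
    have hm : m ≤ 2*ℓ := by omega
    rw [dprod_succ, ih hm, Finset.sum_mul]
    have hstep : ∀ j ∈ Finset.range (m+1), Ffun α ℓ m j * lam α (2*ℓ - m)
        = (Ufun α ℓ m j - Ufun α ℓ m (j+1)) + Ffun α ℓ (m+1) (j+1) := by
      intro j hj
      have hjm : j ≤ m := Nat.lt_succ_iff.mp (Finset.mem_range.mp hj)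
      have hs := star α ℓ m j hjm hm
      linarith
    rw [Finset.sum_congr rfl hstep, Finset.sum_add_distrib, Finset.sum_range_sub']
    have hU0 : Ufun α ℓ m 0 = Ffun α ℓ (m+1) 0 := by
      simp [Ufun, Ffun, dprod]
    have hUm : Ufun α ℓ m (m+1) = 0 := by
      simp [Ufun, dprod_eq_zero α m (2*(m+1)) (by omega)]
    rw [hU0, hUm, sub_zero,
      Finset.sum_range_succ' (fun j => Ffun α ℓ (m+1) j) (m+1)]
    exact add_comm _ _

theorem hobson_one_dim (α : ℝ) (ℓ m : ℕ) (h : m ≤ 2 * ℓ) :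
    (dunkl1 α)^[m] (X ^ (2 * ℓ)) =
      ∑ j ∈ Finset.range (m + 1),
        C ((2 : ℝ) ^ ((m : ℤ) - 2 * (j : ℤ))) *
          ((derivative^[m - j] (X ^ ℓ : Polynomial ℝ)).comp (X ^ 2)) *
          C (1 / (j.factorial : ℝ)) * (dunkl1 α)^[2 * j] (X ^ m) := by
  have key : ∀ j ∈ Finset.range (m+1),
      C ((2:ℝ)^((m:ℤ) - 2*(j:ℤ))) * ((derivative^[m-j] (X^ℓ : Polynomial ℝ)).comp (X^2)) *
        C (1/(j.factorial:ℝ)) * (dunkl1 α)^[2*j] (X^m)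
      = C (Ffun α ℓ m j) * X^(2*ℓ-m) := by
    intro j hj
    rw [dunkl1_iter_X_pow, iterate_derivative_X_pow_eq_C_mul, mul_comp, C_comp, pow_comp,
      X_comp, ← pow_mul]
    rcases lt_or_ge m (2*j) with h1 | h1
    · simp [Ffun, dprod_eq_zero α m (2*j) h1]
    rcases lt_or_ge ℓ (m-j) with h2 | h2
    · simp [Ffun, Nat.descFactorial_eq_zero_iff_lt.mpr h2]
    · have he : (ℓ-(m-j))*2 + (m-2*j) = 2*ℓ-m := by omega
      simp only [Ffun, ← he, pow_add, C_mul]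
      ring
  rw [Finset.sum_congr rfl key, ← Finset.sum_mul, ← map_sum, dunkl1_iter_X_pow,
    ← scalar α ℓ m h]
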